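/- Let F be a finite field, n ≥ 1, and R = M_n(F). Let S ⊆ R with 0 ∉ S and u s v ∈ S for all u, v ∈ GL_n(F) and s ∈ S (i.e., GL_n(F)·S·GL_n(F) = S). Then the adjacency matrix over ℂ of the Cayley graph Γ(R,S) has at most n + 1 distinct eigenvalues; that is, the set of complex numbers λ lying in the spectrum of the adjacency matrix has cardinality at most n + 1. -/

import Mathlib

open Module Submodule LinearMap

private lemma aux_lin_equiv_of_rank {K V : Type*} [Field K] [AddCommGroup V] [Module K V]
    [FiniteDimensional K V] (f g : V →ₗ[K] V)
    (h : finrank K (LinearMap.range f) = finrank K (LinearMap.range g)) :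
    ∃ e₁ e₂ : V ≃ₗ[K] V, g = e₂.toLinearMap ∘ₗ f ∘ₗ e₁.toLinearMap := by
  obtain ⟨Cf, hCf⟩ := (LinearMap.ker f).exists_isCompl
  obtain ⟨Cg, hCg⟩ := (LinearMap.ker g).exists_isCompl
  obtain ⟨Rf, hRf⟩ := (LinearMap.range f).exists_isCompl
  obtain ⟨Rg, hRg⟩ := (LinearMap.range g).exists_isCompl
  let ff : Cf ≃ₗ[K] LinearMap.range f :=
    (Submodule.quotientEquivOfIsCompl _ _ hCf).symm.trans f.quotKerEquivRange
  let gg : Cg ≃ₗ[K] LinearMap.range g :=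
    (Submodule.quotientEquivOfIsCompl _ _ hCg).symm.trans g.quotKerEquivRange
  have hff : ∀ x : Cf, (ff x : V) = f x := fun x => f.quotKerEquivRange_apply_mk x
  have hgg : ∀ x : Cg, (gg x : V) = g x := fun x => g.quotKerEquivRange_apply_mk x
  have hCfr : finrank K Cf = finrank K (LinearMap.range f) := ff.finrank_eq
  have hCgr : finrank K Cg = finrank K (LinearMap.range g) := gg.finrank_eq
  have hjC : finrank K Cg = finrank K Cf := by rw [hCfr, hCgr, h]
  have hsumf := Submodule.finrank_add_eq_of_isCompl hCf
  have hsumg := Submodule.finrank_add_eq_of_isCompl hCg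
  have hsumRf := Submodule.finrank_add_eq_of_isCompl hRf
  have hsumRg := Submodule.finrank_add_eq_of_isCompl hRg
  have hjK : finrank K (LinearMap.ker g) = finrank K (LinearMap.ker f) := by omega
  have hjR : finrank K Rf = finrank K Rg := by omega
  obtain ⟨jC⟩ := FiniteDimensional.nonempty_linearEquiv_of_finrank_eq hjC
  obtain ⟨jK⟩ := FiniteDimensional.nonempty_linearEquiv_of_finrank_eq hjK
  obtain ⟨jR⟩ := FiniteDimensional.nonempty_linearEquiv_of_finrank_eq hjR
  let rr : (LinearMap.range f) ≃ₗ[K] (LinearMap.range g) :=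
    ff.symm.trans (jC.symm.trans gg)
  let e₁ : V ≃ₗ[K] V :=
    (Submodule.prodEquivOfIsCompl _ _ hCg).symm.trans
      ((jK.prodCongr jC).trans (Submodule.prodEquivOfIsCompl _ _ hCf))
  let e₂ : V ≃ₗ[K] V :=
    (Submodule.prodEquivOfIsCompl _ _ hRf).symm.trans
      ((rr.prodCongr jR).trans (Submodule.prodEquivOfIsCompl _ _ hRg))
  refine ⟨e₁, e₂, LinearMap.ext fun x => ?_⟩
  have hx : x ∈ (LinearMap.ker g) ⊔ Cg := by rw [hCg.sup_eq_top]; trivial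
  obtain ⟨k, hk, c, hc, rfl⟩ := Submodule.mem_sup.mp hx
  have he₁ : e₁ (k + c) = (jK ⟨k, hk⟩ : V) + (jC ⟨c, hc⟩ : V) := by
    have hsymm : (Submodule.prodEquivOfIsCompl _ _ hCg).symm (k + c) = (⟨k, hk⟩, ⟨c, hc⟩) := by
      rw [LinearEquiv.symm_apply_eq]; rfl
    simp only [e₁, LinearEquiv.trans_apply, hsymm, LinearEquiv.prodCongr_apply,
      Submodule.coe_prodEquivOfIsCompl']
  have hfe₁ : f (e₁ (k + c)) = (ff (jC ⟨c, hc⟩) : V) := by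
    rw [he₁, map_add, hff]
    have : f ((jK ⟨k, hk⟩ : ↥(LinearMap.ker f)) : V) = 0 := LinearMap.mem_ker.mp (jK ⟨k, hk⟩).2
    rw [this, zero_add]
  have he₂ : e₂ ((ff (jC ⟨c, hc⟩) : V)) = (rr (ff (jC ⟨c, hc⟩)) : V) := by
    simp only [e₂, LinearEquiv.trans_apply, Submodule.prodEquivOfIsCompl_symm_apply_left,
      LinearEquiv.prodCongr_apply, Submodule.coe_prodEquivOfIsCompl', map_zero,
      Submodule.coe_zero, add_zero]
  have hrr : (rr (ff (jC ⟨c, hc⟩)) : V) = g c := by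
    simp only [rr, LinearEquiv.trans_apply, LinearEquiv.symm_apply_apply]
    exact hgg _
  have hgk : g k = 0 := hk
  simp only [LinearMap.coe_comp, Function.comp_apply, LinearEquiv.coe_coe]
  rw [map_add, hgk, zero_add, hfe₁, he₂, hrr]

open Matrix in
private lemma aux_matrix_equiv_of_rank_eq {F : Type*} [Field F] {n : ℕ}
    {A B : Matrix (Fin n) (Fin n) F} (h : A.rank = B.rank) :
    ∃ u v : (Matrix (Fin n) (Fin n) F)ˣ,
      B = (u : Matrix (Fin n) (Fin n) F) * A * (v : Matrix (Fin n) (Fin n) F) := by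
  have hr : finrank F (LinearMap.range (Matrix.mulVecLin A))
      = finrank F (LinearMap.range (Matrix.mulVecLin B)) := h
  obtain ⟨e₁, e₂, hE⟩ := aux_lin_equiv_of_rank (Matrix.mulVecLin A) (Matrix.mulVecLin B) hr
  refine ⟨⟨LinearMap.toMatrix' e₂.toLinearMap, LinearMap.toMatrix' e₂.symm.toLinearMap, ?_, ?_⟩,
          ⟨LinearMap.toMatrix' e₁.toLinearMap, LinearMap.toMatrix' e₁.symm.toLinearMap, ?_, ?_⟩,
          ?_⟩
  · rw [← LinearMap.toMatrix'_comp]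
    have : e₂.toLinearMap ∘ₗ e₂.symm.toLinearMap = LinearMap.id := by ext x; simp
    rw [this, LinearMap.toMatrix'_id]
  · rw [← LinearMap.toMatrix'_comp]
    have : e₂.symm.toLinearMap ∘ₗ e₂.toLinearMap = LinearMap.id := by ext x; simp
    rw [this, LinearMap.toMatrix'_id]
  · rw [← LinearMap.toMatrix'_comp]
    have : e₁.toLinearMap ∘ₗ e₁.symm.toLinearMap = LinearMap.id := by ext x; simp
    rw [this, LinearMap.toMatrix'_id]
  · rw [← LinearMap.toMatrix'_comp]
    have : e₁.symm.toLinearMap ∘ₗ e₁.toLinearMap = LinearMap.id := by ext x; simp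
    rw [this, LinearMap.toMatrix'_id]
  · have hB : LinearMap.toMatrix' (Matrix.mulVecLin B) = B := by
      rw [← Matrix.toLin'_apply', LinearMap.toMatrix'_toLin']
    have hA : LinearMap.toMatrix' (Matrix.mulVecLin A) = A := by
      rw [← Matrix.toLin'_apply', LinearMap.toMatrix'_toLin']
    rw [← hB, hE, LinearMap.toMatrix'_comp, LinearMap.toMatrix'_comp, hA, ← mul_assoc]

open Matrix in
open scoped Classical in
theorem stmt16 {F : Type*} [Field F] [Fintype F] {n : ℕ} (hn : 1 ≤ n)
    (S : Set (Matrix (Fin n) (Fin n) F))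
    (h0 : (0 : Matrix (Fin n) (Fin n) F) ∉ S)
    (hstab : ∀ u v : (Matrix (Fin n) (Fin n) F)ˣ, ∀ s ∈ S,
      (u : Matrix (Fin n) (Fin n) F) * s * (v : Matrix (Fin n) (Fin n) F) ∈ S) :
    (spectrum ℂ (Matrix.of fun a b : Matrix (Fin n) (Fin n) F =>
        if a - b ∈ S then (1 : ℂ) else 0)).ncard ≤ n + 1 := by
  set M : Matrix (Matrix (Fin n) (Fin n) F) (Matrix (Fin n) (Fin n) F) ℂ := Matrix.of fun a b : (Matrix (Fin n) (Fin n) F) => if a - b ∈ S then (1 : ℂ) else 0 with hMdef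
  have hSfin : S.Finite := Set.toFinite S
  set SF : Finset (Matrix (Fin n) (Fin n) F) := hSfin.toFinset with hSF
  have hmemSF : ∀ s : (Matrix (Fin n) (Fin n) F), s ∈ SF ↔ s ∈ S := fun s => hSfin.mem_toFinset
  set e : AddChar (Matrix (Fin n) (Fin n) F) ℂ → ℂ := fun χ => ∑ s ∈ SF, χ (-s) with he
  -- each character is an eigenvector
  have heig : ∀ χ : AddChar (Matrix (Fin n) (Fin n) F) ℂ, M *ᵥ ⇑χ = e χ • ⇑χ := by
    intro χ
    funext a
    have : (M *ᵥ ⇑χ) a = ∑ b : (Matrix (Fin n) (Fin n) F), (if a - b ∈ S then (1 : ℂ) else 0) * χ b := rfl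
    rw [this]
    have h1 : ∑ b : (Matrix (Fin n) (Fin n) F), (if a - b ∈ S then (1 : ℂ) else 0) * χ b
        = ∑ b ∈ Finset.univ.filter (fun b : (Matrix (Fin n) (Fin n) F) => a - b ∈ S), χ b := by
      rw [Finset.sum_filter]
      exact Finset.sum_congr rfl fun b _ => by split_ifs <;> simp
    have h2 : ∑ b ∈ Finset.univ.filter (fun b : (Matrix (Fin n) (Fin n) F) => a - b ∈ S), χ b
        = ∑ s ∈ SF, χ (a - s) := by
      refine (Finset.sum_nbij' (i := fun s => a - s) (j := fun b => a - b) ?_ ?_ ?_ ?_ ?_).symm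
      · intro s hs
        simp only [Finset.mem_filter, Finset.mem_univ, true_and, sub_sub_cancel]
        exact (hmemSF s).mp hs
      · intro b hb
        simp only [Finset.mem_filter, Finset.mem_univ, true_and] at hb
        exact (hmemSF _).mpr hb
      · intro s _; simp
      · intro b _; simp
      · intro s _; rfl
    have h3 : ∑ s ∈ SF, χ (a - s) = χ a * e χ := by
      rw [he, Finset.mul_sum]
      exact Finset.sum_congr rfl fun s _ => by
        rw [sub_eq_add_neg, AddChar.map_add_eq_mul]
    rw [h1, h2, h3]
    simp [mul_comm]
  -- every element of the spectrum is of the form `e χ`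
  have hspec : spectrum ℂ M ⊆ Set.range e := by
    intro μ hμ
    have hμ' : μ ∈ spectrum ℂ (Matrix.toLinAlgEquiv' M) := by
      rwa [AlgEquiv.spectrum_eq]
    have hev : Module.End.HasEigenvalue (Matrix.toLinAlgEquiv' M) μ :=
      Module.End.HasEigenvalue.of_mem_spectrum hμ'
    obtain ⟨v, hv⟩ := hev.exists_hasEigenvector
    have hv0 : v ≠ 0 := hv.right
    have hMv : M *ᵥ v = μ • v := hv.apply_eq_smul
    set b := AddChar.complexBasis (Matrix (Fin n) (Fin n) F) with hb
    set c := b.repr v with hc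
    have hvsum : v = ∑ χ : AddChar (Matrix (Fin n) (Fin n) F) ℂ, c χ • ⇑χ := by
      conv_lhs => rw [← b.sum_repr v]
      exact Finset.sum_congr rfl fun χ _ => by rw [AddChar.complexBasis_apply]
    have hMv2 : M *ᵥ v = ∑ χ : AddChar (Matrix (Fin n) (Fin n) F) ℂ, (c χ * e χ) • ⇑χ := by
      conv_lhs => rw [hvsum]
      have : M *ᵥ (∑ χ : AddChar (Matrix (Fin n) (Fin n) F) ℂ, c χ • ⇑χ) = ∑ χ : AddChar (Matrix (Fin n) (Fin n) F) ℂ, c χ • (M *ᵥ ⇑χ) := by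
        rw [← M.mulVecLin_apply, map_sum]
        exact Finset.sum_congr rfl fun χ _ => by rw [_root_.map_smul, M.mulVecLin_apply]
      rw [this]
      exact Finset.sum_congr rfl fun χ _ => by rw [heig χ, smul_smul]
    have hμv : μ • v = ∑ χ : AddChar (Matrix (Fin n) (Fin n) F) ℂ, (μ * c χ) • ⇑χ := by
      conv_lhs => rw [hvsum]
      rw [Finset.smul_sum]
      exact Finset.sum_congr rfl fun χ _ => by rw [smul_smul]
    have hzero : ∑ χ : AddChar (Matrix (Fin n) (Fin n) F) ℂ, (c χ * e χ - μ * c χ) • (⇑χ : (Matrix (Fin n) (Fin n) F) → ℂ) = 0 := by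
      calc ∑ χ : AddChar (Matrix (Fin n) (Fin n) F) ℂ, (c χ * e χ - μ * c χ) • (⇑χ : (Matrix (Fin n) (Fin n) F) → ℂ)
          = (∑ χ : AddChar (Matrix (Fin n) (Fin n) F) ℂ, (c χ * e χ) • (⇑χ : (Matrix (Fin n) (Fin n) F) → ℂ))
            - ∑ χ : AddChar (Matrix (Fin n) (Fin n) F) ℂ, (μ * c χ) • (⇑χ : (Matrix (Fin n) (Fin n) F) → ℂ) := by
            rw [← Finset.sum_sub_distrib]
            exact Finset.sum_congr rfl fun χ _ => by rw [sub_smul]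
        _ = (M *ᵥ v) - μ • v := by rw [hMv2, hμv]
        _ = 0 := by rw [hMv, sub_self]
    have hcoeff := Fintype.linearIndependent_iff.mp (AddChar.linearIndependent (Matrix (Fin n) (Fin n) F) ℂ)
      (fun χ => c χ * e χ - μ * c χ) hzero
    have hcne : ∃ χ : AddChar (Matrix (Fin n) (Fin n) F) ℂ, c χ ≠ 0 := by
      by_contra hall
      push_neg at hall
      apply hv0
      rw [hvsum]
      simp [hall]
    obtain ⟨χ, hχ⟩ := hcne
    have hcχ := hcoeff χ
    have hμe : μ = e χ := by
      have h' : c χ * (e χ - μ) = 0 := by linear_combination hcχ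
      rcases mul_eq_zero.mp h' with h'' | h''
      · exact absurd h'' hχ
      · exact (sub_eq_zero.mp h'').symm
    exact ⟨χ, hμe.symm⟩
  -- classification of characters via the trace pairing
  set ψ : AddChar F ℂ := AddChar.FiniteField.primitiveChar_to_Complex F with hψ
  have hψprim : ψ.IsPrimitive := AddChar.FiniteField.primitiveChar_to_Complex_isPrimitive F
  have hψne : ∀ x : F, ψ x ≠ 0 := by
    intro x hx
    have h1 : ψ x * ψ (-x) = 1 := by
      rw [← AddChar.map_add_eq_mul, add_neg_cancel, AddChar.map_zero_eq_one]
    rw [hx, zero_mul] at h1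
    exact zero_ne_one h1
  set τ : (Matrix (Fin n) (Fin n) F) → ((Matrix (Fin n) (Fin n) F) →+ F) := fun A =>
    { toFun := fun X => (A * X).trace
      map_zero' := by simp
      map_add' := fun X Y => by
        show (A * (X + Y)).trace = (A * X).trace + (A * Y).trace
        rw [mul_add, Matrix.trace_add] } with hτ
  set Φ : (Matrix (Fin n) (Fin n) F) → AddChar (Matrix (Fin n) (Fin n) F) ℂ := fun A => ψ.compAddMonoidHom (τ A) with hΦ
  have hΦapp : ∀ (A X : (Matrix (Fin n) (Fin n) F)), Φ A X = ψ ((A * X).trace) := fun A X => rfl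
  have hΦinj : Function.Injective Φ := by
    intro A₁ A₂ h12
    by_contra hne
    set C : (Matrix (Fin n) (Fin n) F) := A₁ - A₂ with hC
    have hCne : C ≠ 0 := sub_ne_zero.mpr hne
    have hCtriv : ∀ X : (Matrix (Fin n) (Fin n) F), ψ ((C * X).trace) = 1 := by
      intro X
      have h1 : ψ ((A₁ * X).trace) = ψ ((A₂ * X).trace) := by
        rw [← hΦapp, ← hΦapp, h12]
      have h2 : (A₁ * X).trace = (A₂ * X).trace + (C * X).trace := by
        rw [hC, Matrix.sub_mul, Matrix.trace_sub]; ring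
      rw [h2, AddChar.map_add_eq_mul] at h1
      have := hψne ((A₂ * X).trace)
      field_simp at h1
      exact h1
    obtain ⟨i, j, hij⟩ : ∃ i j, C i j ≠ 0 := by
      by_contra hall
      push_neg at hall
      exact hCne (by ext i j; simpa using hall i j)
    have hms : AddChar.mulShift ψ (C i j) ≠ 1 := hψprim hij
    obtain ⟨x, hx⟩ := DFunLike.ne_iff.mp hms
    apply hx
    have htr : (C * Matrix.single j i x).trace = C i j * x := by
      simp [Matrix.trace, Matrix.diag, Matrix.mul_apply, Matrix.single, Matrix.of_apply,
        ite_and, mul_ite, mul_zero, Finset.sum_ite_eq]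
    have := hCtriv (Matrix.single j i x)
    rw [htr] at this
    rw [AddChar.mulShift_apply, this, AddChar.one_apply]
  have hΦsurj : Function.Surjective Φ := by
    have : Function.Bijective Φ := (Fintype.bijective_iff_injective_and_card Φ).mpr
      ⟨hΦinj, (AddChar.card_eq).symm⟩
    exact this.2
  -- `e (Φ A)` is invariant under two-sided multiplication by units
  have hg : ∀ (A : (Matrix (Fin n) (Fin n) F)) (u v : (Matrix (Fin n) (Fin n) F)ˣ), e (Φ ((u : (Matrix (Fin n) (Fin n) F)) * A * (v : (Matrix (Fin n) (Fin n) F)))) = e (Φ A) := by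
    intro A u v
    rw [he]
    refine Finset.sum_nbij' (i := fun s => (v : (Matrix (Fin n) (Fin n) F)) * s * (u : (Matrix (Fin n) (Fin n) F)))
      (j := fun t => ((v⁻¹ : (Matrix (Fin n) (Fin n) F)ˣ) : (Matrix (Fin n) (Fin n) F)) * t * ((u⁻¹ : (Matrix (Fin n) (Fin n) F)ˣ) : (Matrix (Fin n) (Fin n) F))) ?_ ?_ ?_ ?_ ?_
    · intro s hs
      exact (hmemSF _).mpr (hstab v u s ((hmemSF s).mp hs))
    · intro t ht
      exact (hmemSF _).mpr (hstab v⁻¹ u⁻¹ t ((hmemSF t).mp ht))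
    · intro s _
      show ((v⁻¹ : (Matrix (Fin n) (Fin n) F)ˣ) : (Matrix (Fin n) (Fin n) F)) * ((v : (Matrix (Fin n) (Fin n) F)) * s * (u : (Matrix (Fin n) (Fin n) F))) * ((u⁻¹ : (Matrix (Fin n) (Fin n) F)ˣ) : (Matrix (Fin n) (Fin n) F)) = s
      rw [← mul_assoc, ← mul_assoc, Units.inv_mul, one_mul, mul_assoc, Units.mul_inv, mul_one]
    · intro t _
      show (v : (Matrix (Fin n) (Fin n) F)) * (((v⁻¹ : (Matrix (Fin n) (Fin n) F)ˣ) : (Matrix (Fin n) (Fin n) F)) * t * ((u⁻¹ : (Matrix (Fin n) (Fin n) F)ˣ) : (Matrix (Fin n) (Fin n) F))) * (u : (Matrix (Fin n) (Fin n) F)) = t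
      rw [← mul_assoc, ← mul_assoc, Units.mul_inv, one_mul, mul_assoc, Units.inv_mul, mul_one]
    · intro s _
      rw [hΦapp, hΦapp]
      congr 1
      have : ((u : (Matrix (Fin n) (Fin n) F)) * A * (v : (Matrix (Fin n) (Fin n) F))) * (-s) = -((u : (Matrix (Fin n) (Fin n) F)) * (A * ((v : (Matrix (Fin n) (Fin n) F)) * s))) := by
        simp [mul_assoc]
      rw [this, Matrix.trace_neg, Matrix.trace_mul_comm ((u : (Matrix (Fin n) (Fin n) F))),
        show (A * ((v : (Matrix (Fin n) (Fin n) F)) * s)) * (u : (Matrix (Fin n) (Fin n) F)) = A * ((v : (Matrix (Fin n) (Fin n) F)) * s * (u : (Matrix (Fin n) (Fin n) F))) by rw [mul_assoc],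
        show A * (-((v : (Matrix (Fin n) (Fin n) F)) * s * (u : (Matrix (Fin n) (Fin n) F)))) = -(A * ((v : (Matrix (Fin n) (Fin n) F)) * s * (u : (Matrix (Fin n) (Fin n) F)))) by simp,
        Matrix.trace_neg]
  -- `e (Φ A)` depends only on the rank of `A`
  set k : ℕ → ℂ := fun r => if hr : ∃ A : (Matrix (Fin n) (Fin n) F), A.rank = r then e (Φ hr.choose) else 0 with hk
  have hkA : ∀ A : (Matrix (Fin n) (Fin n) F), e (Φ A) = k A.rank := by
    intro A
    have hex : ∃ B : (Matrix (Fin n) (Fin n) F), B.rank = A.rank := ⟨A, rfl⟩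
    rw [hk]
    simp only [dif_pos hex]
    obtain ⟨u, v, hA⟩ := aux_matrix_equiv_of_rank_eq (hex.choose_spec)
    conv_lhs => rw [hA]
    exact hg _ u v
  -- conclude
  have hsub : spectrum ℂ M ⊆ k '' Set.Iic n := by
    intro μ hμ
    obtain ⟨χ, hχ⟩ := hspec hμ
    obtain ⟨A, rfl⟩ := hΦsurj χ
    refine ⟨A.rank, ?_, by rw [← hkA, hχ]⟩
    simpa using A.rank_le_card_width
  calc (spectrum ℂ M).ncard ≤ (k '' Set.Iic n).ncard :=
        Set.ncard_le_ncard hsub ((Set.finite_Iic n).image k)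
    _ ≤ (Set.Iic n).ncard := Set.ncard_image_le (Set.finite_Iic n)
    _ = n + 1 := by rw [← Finset.coe_Iic, Set.ncard_coe_finset, Nat.card_Iic]
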